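/- arXiv:1811.04701 — 4 statements merged into one kernel-verified Lean document; each statement's English description precedes it below -/
import Mathlib

section
/- For every positive integer d, the evaluation at q=1 of the Weyl-Mahonian polynomial M_d^±(q,t) = ∑_{σ∈S_d^±} q^{l^±(σ)} t^{Wmaj(σ)} factorizes as (1+t)^d · ∏_{j=1}^d (t^j-1)/(t-1). Equivalently, ∑_{σ∈S_d^±} t^{Wmaj(σ)} = (1+t)^d ∏_{j=1}^d (1+t+⋯+t^{j-1}). -/
open Finset

/-- A signed permutation of `{±1, …, ±d}` is encoded by an (unsigned)
permutation of `Fin d` together with a sign vector; `sVal σ i` is the value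
`σ(i) ∈ {±1, …, ±d}` at `i ∈ {1, …, d}` (0-indexed). -/
def sVal {d : ℕ} (σ : Equiv.Perm (Fin d) × (Fin d → Bool)) (i : Fin d) : ℤ :=
  (if σ.2 i then -1 else 1) * ((σ.1 i : ℕ) + 1)

/-- Number of inversions of a signed permutation:
pairs `i < j` with `σ(i)σ(j)(σ(i)-σ(j)) > 0`. -/
def sInv {d : ℕ} (σ : Equiv.Perm (Fin d) × (Fin d → Bool)) : ℕ :=
  (Finset.univ.filter (fun p : Fin d × Fin d => p.1 < p.2 ∧
    0 < sVal σ p.1 * sVal σ p.2 * (sVal σ p.1 - sVal σ p.2))).card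

/-- Number of `i ∈ {1, …, d}` with `σ(i) < 0`. -/
def sNeg {d : ℕ} (σ : Equiv.Perm (Fin d) × (Fin d → Bool)) : ℕ :=
  (Finset.univ.filter (fun i : Fin d => sVal σ i < 0)).card

/-- The type-BC (Coxeter) length
`l^±(σ) = #inversions + ∑_{σ(i)<0} (d + 1 + σ(i))`. -/
def sLenBC {d : ℕ} (σ : Equiv.Perm (Fin d) × (Fin d → Bool)) : ℕ :=
  sInv σ + ∑ i ∈ Finset.univ.filter (fun i : Fin d => sVal σ i < 0),
    ((d : ℤ) + 1 + sVal σ i).toNat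

/-- The Weyl-Major index
`Wmaj(σ) = ∑_{0<i<d, σ(i)>σ(i+1)} i + #{i : σ(i) < 0}`. -/
def sWmaj {d : ℕ} (σ : Equiv.Perm (Fin d) × (Fin d → Bool)) : ℕ :=
  (∑ i ∈ Finset.range d, if h : i + 1 < d then
      (if sVal σ ⟨i + 1, h⟩ < sVal σ ⟨i, Nat.lt_of_succ_lt h⟩ then i + 1 else 0)
    else 0) + sNeg σ


set_option linter.unreachableTactic false
set_option linter.unusedTactic false
set_option linter.unnecessarySeqFocus false
set_option linter.unusedVariables false

namespace SP

/-- maj-type sum over `m` adjacent pairs of `g`. -/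
def majn (g : ℕ → ℤ) (m : ℕ) : ℕ := ∑ i ∈ Finset.range m, if g (i+1) < g i then i+1 else 0

/-- number of negative entries among the first `n`. -/
def negn (g : ℕ → ℤ) (n : ℕ) : ℕ := ∑ i ∈ Finset.range n, if g i < 0 then 1 else 0

/-- Weyl-major index of a word of length `n`. -/
def wmajn (g : ℕ → ℤ) (n : ℕ) : ℕ := majn g (n-1) + negn g n

/-- insert value `v` at position `p`. -/
def insF (g : ℕ → ℤ) (p : ℕ) (v : ℤ) : ℕ → ℤ :=
  fun i => if i < p then g i else if i = p then v else g (i-1)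

/-- number of descents of `g` (length `n`) at positions `≥ p`. -/
def dge (g : ℕ → ℤ) (n p : ℕ) : ℕ :=
  ((Finset.Ico p (n-1)).filter (fun j => g (j+1) < g j)).card

/-- the increment statistic. -/
def dtil (g : ℕ → ℤ) (n p : ℕ) : ℕ :=
  if 0 < p ∧ p < n ∧ g p < g (p-1) then 1 + dge g n p else (p+1) + dge g n p

lemma insF_lt {g p v i} (h : i < p) : insF g p v i = g i := if_pos h
lemma insF_self {g p v} : insF g p v p = v := by simp [insF]
lemma insF_gt {g p v i} (h : p < i) : insF g p v i = g (i-1) := by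
  simp [insF, Nat.not_lt.2 h.le, Nat.ne_of_gt h]

lemma majn_congr {g g' : ℕ → ℤ} {m : ℕ} (h : ∀ i ≤ m, g i = g' i) :
    majn g m = majn g' m := by
  unfold majn
  refine Finset.sum_congr rfl fun i hi => ?_
  have hi' := Finset.mem_range.1 hi
  rw [h i (by omega), h (i+1) (by omega)]

lemma negn_congr {g g' : ℕ → ℤ} {n : ℕ} (h : ∀ i < n, g i = g' i) :
    negn g n = negn g' n := by
  unfold negn
  refine Finset.sum_congr rfl fun i hi => ?_
  rw [h i (Finset.mem_range.1 hi)]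

lemma wmajn_congr {g g' : ℕ → ℤ} {n : ℕ} (h : ∀ i < n, g i = g' i) :
    wmajn g n = wmajn g' n := by
  rcases Nat.eq_zero_or_pos n with rfl | hn
  · simp [wmajn, majn, negn]
  unfold wmajn
  rw [majn_congr (fun i hi => h i (by omega)), negn_congr h]

lemma negn_insF {g : ℕ → ℤ} {p n : ℕ} {v : ℤ} (hp : p ≤ n) :
    negn (insF g p v) (n+1) = negn g n + (if v < 0 then 1 else 0) := by
  unfold negn
  have h1 : ∑ i ∈ Finset.range p, (if insF g p v i < 0 then 1 else 0)
      = ∑ i ∈ Finset.range p, (if g i < 0 then 1 else 0) := by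
    refine Finset.sum_congr rfl fun i hi => ?_
    rw [insF_lt (Finset.mem_range.1 hi)]
  have h2 : ∑ i ∈ Finset.Ico (p+1) (n+1), (if insF g p v i < 0 then 1 else 0)
      = ∑ i ∈ Finset.Ico p n, (if g i < 0 then 1 else 0) := by
    rw [Finset.sum_Ico_eq_sum_range, Finset.sum_Ico_eq_sum_range,
      show n + 1 - (p+1) = n - p from by omega]
    refine Finset.sum_congr rfl fun i _ => ?_
    rw [insF_gt (by omega), show p + 1 + i - 1 = p + i from by omega]
  calc ∑ i ∈ Finset.range (n+1), (if insF g p v i < 0 then 1 else 0)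
      = ∑ i ∈ Finset.range p, (if insF g p v i < 0 then 1 else 0)
        + ∑ i ∈ Finset.Ico p (n+1), (if insF g p v i < 0 then 1 else 0) := by
        rw [Finset.sum_range_add_sum_Ico _ (by omega)]
    _ = ∑ i ∈ Finset.range p, (if g i < 0 then 1 else 0)
        + ((if v < 0 then 1 else 0) + ∑ i ∈ Finset.Ico p n, (if g i < 0 then 1 else 0)) := by
        rw [h1, Finset.sum_eq_sum_Ico_succ_bot (by omega), insF_self, h2]
    _ = _ := by
        rw [← add_assoc, add_comm (∑ i ∈ Finset.range p, _) _, add_assoc,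
          Finset.sum_range_add_sum_Ico _ hp, add_comm]


lemma sum_shift {g : ℕ → ℤ} {p n : ℕ} (h : p < n) :
    ∑ j ∈ Finset.Ico (p+1) n, (if g j < g (j-1) then j+1 else 0)
      = (∑ i ∈ Finset.Ico p (n-1), (if g (i+1) < g i then i+1 else 0)) + dge g n p := by
  have e1 : ∑ j ∈ Finset.Ico (p+1) n, (if g j < g (j-1) then j+1 else 0)
      = ∑ i ∈ Finset.Ico p (n-1), (if g (i+1) < g i then i+2 else 0) := by
    rw [Finset.sum_Ico_eq_sum_range, Finset.sum_Ico_eq_sum_range,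
      show n - (p+1) = n-1-p from by omega]
    refine Finset.sum_congr rfl fun i _ => ?_
    rw [show p+1+i-1 = p+i from by omega, show p+1+i = p+i+1 from by omega]
  rw [e1, dge, Finset.card_filter, ← Finset.sum_add_distrib]
  refine Finset.sum_congr rfl fun i _ => ?_
  split <;> omega

lemma majn_insF {g : ℕ → ℤ} {p n : ℕ} {v : ℤ} (hp : p ≤ n) :
    majn (insF g p v) n + (if 0 < p ∧ p < n ∧ g p < g (p-1) then p else 0)
      = majn g (n-1) + (if 0 < p ∧ v < g (p-1) then p else 0)
        + (if p < n ∧ g p < v then p+1 else 0) + dge g n p := by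
  rcases Nat.eq_zero_or_pos p with rfl | hp1
  · -- p = 0
    rcases Nat.eq_zero_or_pos n with rfl | hn
    · simp [majn, dge]
    have key : majn (insF g 0 v) n
        = (if insF g 0 v (0+1) < insF g 0 v 0 then 0+1 else 0)
          + ∑ j ∈ Finset.Ico (0+1) n, (if insF g 0 v (j+1) < insF g 0 v j then j+1 else 0) := by
      rw [majn, Finset.range_eq_Ico, Finset.sum_eq_sum_Ico_succ_bot hn]
    have h0 : (if insF g 0 v (0+1) < insF g 0 v 0 then 0+1 else 0)
        = (if g 0 < v then 1 else 0) := by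
      rw [insF_gt (by omega : (0:ℕ) < 0+1), insF_self]
    have h1 : ∑ j ∈ Finset.Ico (0+1) n, (if insF g 0 v (j+1) < insF g 0 v j then j+1 else 0)
        = ∑ j ∈ Finset.Ico (0+1) n, (if g j < g (j-1) then j+1 else 0) := by
      refine Finset.sum_congr rfl fun j hj => ?_
      have hj1 := (Finset.mem_Ico.1 hj).1
      rw [insF_gt (by omega : (0:ℕ) < j+1), insF_gt (by omega : (0:ℕ) < j),
        show j+1-1 = j from by omega]
    have h2 : ∑ i ∈ Finset.Ico 0 (n-1), (if g (i+1) < g i then i+1 else 0) = majn g (n-1) := by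
      rw [majn, Finset.range_eq_Ico]
    rw [key, h0, h1, sum_shift hn, h2]
    split_ifs <;> omega
  · rcases eq_or_lt_of_le hp with rfl | hpn
    · -- p = n (and 0 < p)
      have key : majn (insF g p v) p
          = (∑ j ∈ Finset.range (p-1), (if insF g p v (j+1) < insF g p v j then j+1 else 0))
            + (if insF g p v p < insF g p v (p-1) then p else 0) := by
        rw [majn, show p = (p-1)+1 from by omega, Finset.sum_range_succ,
          show p-1+1 = p from by omega]
      have h1 : ∑ j ∈ Finset.range (p-1), (if insF g p v (j+1) < insF g p v j then j+1 else 0)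
          = majn g (p-1) := by
        refine Finset.sum_congr rfl fun j hj => ?_
        have hj1 := Finset.mem_range.1 hj
        rw [insF_lt (by omega), insF_lt (by omega)]
      have h2 : (if insF g p v p < insF g p v (p-1) then p else 0)
          = (if v < g (p-1) then p else 0) := by
        rw [insF_self, insF_lt (by omega)]
      have hdge : dge g p p = 0 := by
        rw [dge, Finset.Ico_eq_empty (by omega)]; simp
      rw [key, h1, h2, hdge]
      split_ifs <;> omega
    · -- 0 < p < n
      have key : majn (insF g p v) n
          = (∑ j ∈ Finset.range (p-1), (if insF g p v (j+1) < insF g p v j then j+1 else 0))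
            + ((if insF g p v p < insF g p v (p-1) then p else 0)
              + ((if insF g p v (p+1) < insF g p v p then p+1 else 0)
                + ∑ j ∈ Finset.Ico (p+1) n, (if insF g p v (j+1) < insF g p v j then j+1 else 0))) := by
        rw [majn, ← Finset.sum_range_add_sum_Ico _ (show p-1 ≤ n from by omega),
          Finset.sum_eq_sum_Ico_succ_bot (show p-1 < n from by omega),
          show p-1+1 = p from by omega,
          Finset.sum_eq_sum_Ico_succ_bot hpn]
      have h1 : ∑ j ∈ Finset.range (p-1), (if insF g p v (j+1) < insF g p v j then j+1 else 0)
          = ∑ j ∈ Finset.range (p-1), (if g (j+1) < g j then j+1 else 0) := by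
        refine Finset.sum_congr rfl fun j hj => ?_
        have hj1 := Finset.mem_range.1 hj
        rw [insF_lt (by omega), insF_lt (by omega)]
      have h2 : (if insF g p v p < insF g p v (p-1) then p else 0)
          = (if v < g (p-1) then p else 0) := by
        rw [insF_self, insF_lt (by omega)]
      have h3 : (if insF g p v (p+1) < insF g p v p then p+1 else 0)
          = (if g p < v then p+1 else 0) := by
        rw [insF_gt (by omega), insF_self, show p+1-1 = p from by omega]
      have h4 : ∑ j ∈ Finset.Ico (p+1) n, (if insF g p v (j+1) < insF g p v j then j+1 else 0)
          = ∑ j ∈ Finset.Ico (p+1) n, (if g j < g (j-1) then j+1 else 0) := by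
        refine Finset.sum_congr rfl fun j hj => ?_
        have hj1 := (Finset.mem_Ico.1 hj).1
        rw [insF_gt (by omega), insF_gt (by omega), show j+1-1 = j from by omega]
      have old : majn g (n-1)
          = (∑ j ∈ Finset.range (p-1), (if g (j+1) < g j then j+1 else 0))
            + ((if g (p-1+1) < g (p-1) then p-1+1 else 0)
              + ∑ i ∈ Finset.Ico p (n-1), (if g (i+1) < g i then i+1 else 0)) := by
        rw [majn, ← Finset.sum_range_add_sum_Ico _ (show p-1 ≤ n-1 from by omega),
          Finset.sum_eq_sum_Ico_succ_bot (show p-1 < n-1 from by omega),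
          show p-1+1 = p from by omega]
      rw [key, h1, h2, h3, h4, sum_shift hpn, old, show p-1+1 = p from by omega]
      split_ifs <;> omega


lemma dge_le {g : ℕ → ℤ} {n p : ℕ} : dge g n p ≤ n - 1 - p := by
  calc dge g n p ≤ (Finset.Ico p (n-1)).card := Finset.card_filter_le _ _
    _ = n - 1 - p := Nat.card_Ico _ _

/-- insert a maximum: the wmaj increment. -/
lemma wmajn_insF_max {g : ℕ → ℤ} {p n : ℕ} {v : ℤ} (hp : p ≤ n) (hv : 0 < v)
    (hmax : ∀ i < n, g i < v) :
    wmajn (insF g p v) (n+1) = wmajn g n + (if p = n then 0 else dtil g n p) := by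
  have hmaj := majn_insF (g := g) (p := p) (n := n) (v := v) hp
  have hneg := negn_insF (g := g) (p := p) (n := n) (v := v) hp
  have h1 : (if 0 < p ∧ v < g (p-1) then p else 0) = 0 := by
    split_ifs with h
    · exact absurd (hmax (p-1) (by omega)) (by push_neg; exact h.2.le)
    · rfl
  have h2 : (if p < n ∧ g p < v then p+1 else 0) = (if p < n then p+1 else 0) := by
    by_cases h : p < n
    · rw [if_pos ⟨h, hmax p h⟩, if_pos h]
    · rw [if_neg (fun hc => h hc.1), if_neg h]
  have h3 : (if v < 0 then 1 else 0) = 0 := by rw [if_neg (by omega)]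
  have hdge : dge g n n = 0 := by
    rw [dge, Finset.Ico_eq_empty (by omega)]; simp
  rw [wmajn, wmajn, Nat.add_sub_cancel, hneg, h3]
  rw [h1, h2] at hmaj
  unfold dtil
  rcases eq_or_lt_of_le hp with rfl | hpn
  · rw [if_pos rfl]
    rw [hdge] at hmaj
    split_ifs at hmaj ⊢ <;> omega
  · rw [if_neg (by omega)]
    split_ifs at hmaj ⊢ <;> omega

/-- insert a minimum: the wmaj increment. -/
lemma wmajn_insF_min {g : ℕ → ℤ} {p n : ℕ} {v : ℤ} (hp : p ≤ n) (hv : v < 0)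
    (hmin : ∀ i < n, v < g i) :
    wmajn (insF g p v) (n+1) = wmajn g n + dtil g n p := by
  have hmaj := majn_insF (g := g) (p := p) (n := n) (v := v) hp
  have hneg := negn_insF (g := g) (p := p) (n := n) (v := v) hp
  have h1 : (if 0 < p ∧ v < g (p-1) then p else 0) = (if 0 < p then p else 0) := by
    by_cases h : 0 < p
    · rw [if_pos ⟨h, hmin (p-1) (by omega)⟩, if_pos h]
    · rw [if_neg (fun hc => h hc.1), if_neg h]
  have h2 : (if p < n ∧ g p < v then p+1 else 0) = 0 := by
    split_ifs with h
    · exact absurd (hmin p h.1) (by push_neg; exact h.2.le)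
    · rfl
  have h3 : (if v < 0 then 1 else 0) = 1 := if_pos hv
  have hdge : dge g n n = 0 := by
    rw [dge, Finset.Ico_eq_empty (by omega)]; simp
  rw [wmajn, wmajn, Nat.add_sub_cancel, hneg, h3]
  rw [h1, h2] at hmaj
  unfold dtil
  rcases eq_or_lt_of_le hp with rfl | hpn
  · rw [hdge] at hmaj
    split_ifs at hmaj ⊢ <;> omega
  · split_ifs at hmaj ⊢ <;> omega

lemma dtil_lt {g : ℕ → ℤ} {n p : ℕ} (h : p < n) : dtil g n p ≤ n := by
  have := dge_le (g := g) (n := n) (p := p)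
  unfold dtil
  split_ifs with hh <;> omega

lemma dtil_top {g : ℕ → ℤ} {n : ℕ} : dtil g n n = n + 1 := by
  have hdge : dge g n n = 0 := by
    rw [dge, Finset.Ico_eq_empty (by omega)]; simp
  rw [dtil, if_neg (by omega), hdge]

lemma dtil_pos {g : ℕ → ℤ} {n p : ℕ} : 0 < dtil g n p := by
  unfold dtil; split_ifs <;> omega

lemma dtil_injOn {g : ℕ → ℤ} {n : ℕ} {p q : ℕ} (hpq : p < q) (hq : q ≤ n) :
    dtil g n p ≠ dtil g n q := by
  rcases eq_or_lt_of_le hq with rfl | hqn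
  · rw [dtil_top]
    have := dtil_lt (g := g) (n := q) (p := p) hpq
    omega
  -- q < n
  have hsplit : dge g n p = ((Finset.Ico p q).filter (fun j => g (j+1) < g j)).card + dge g n q := by
    rw [dge, dge, ← Finset.Ico_union_Ico_eq_Ico hpq.le (by omega : q ≤ n-1),
      Finset.filter_union, Finset.card_union_of_disjoint]
    exact Finset.disjoint_filter_filter (Finset.Ico_disjoint_Ico_consecutive _ _ _)
  set c := ((Finset.Ico p q).filter (fun j => g (j+1) < g j)).card with hc
  have hcle : c ≤ q - p := by
    calc c ≤ (Finset.Ico p q).card := Finset.card_filter_le _ _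
      _ = q - p := Nat.card_Ico _ _
  have hq1 : 0 < q := by omega
  by_cases hQ : g q < g (q-1)
  · -- q is descent type; c ≥ 1
    have hc1 : 1 ≤ c := by
      rw [hc]
      refine Finset.card_pos.2 ⟨q-1, Finset.mem_filter.2 ⟨Finset.mem_Ico.2 (by omega), ?_⟩⟩
      rw [show q-1+1 = q from by omega]
      exact hQ
    have e1 : dtil g n q = 1 + dge g n q := by rw [dtil, if_pos ⟨hq1, hqn, hQ⟩]
    rw [e1, dtil]
    split_ifs with hP <;> omega
  · -- q is ascent type; c ≤ q - p - 1
    have hcle' : c ≤ q - p - 1 := by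
      have hsub : (Finset.Ico p q).filter (fun j => g (j+1) < g j)
          ⊆ (Finset.Ico p q).erase (q-1) := by
        intro x hx
        rcases Finset.mem_filter.1 hx with ⟨hx1, hx2⟩
        refine Finset.mem_erase.2 ⟨?_, hx1⟩
        rintro rfl
        rw [show q-1+1 = q from by omega] at hx2
        exact hQ hx2
      calc c ≤ ((Finset.Ico p q).erase (q-1)).card := Finset.card_le_card hsub
        _ = (Finset.Ico p q).card - 1 := Finset.card_erase_of_mem (Finset.mem_Ico.2 (by omega))
        _ = q - p - 1 := by rw [Nat.card_Ico]
    have e1 : dtil g n q = (q+1) + dge g n q := by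
      rw [dtil, if_neg]
      rintro ⟨-, -, h⟩
      exact hQ h
    rw [e1, dtil]
    split_ifs with hP <;> omega


lemma dtil_inj {g : ℕ → ℤ} {n m : ℕ} (hm : m ≤ n + 1) :
    Set.InjOn (dtil g n) (Finset.range m) := by
  intro p hp q hq hpq
  simp only [Finset.coe_range, Set.mem_Iio] at hp hq
  by_contra hne
  rcases Nat.lt_or_ge p q with h | h
  · exact dtil_injOn h (by omega) hpq
  · exact dtil_injOn (by omega) (by omega) hpq.symm

lemma image_dtil_lt {g : ℕ → ℤ} {n : ℕ} :
    (Finset.range n).image (dtil g n) = Finset.Icc 1 n := by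
  refine Finset.eq_of_subset_of_card_le ?_ ?_
  · intro x hx
    rcases Finset.mem_image.1 hx with ⟨p, hp, rfl⟩
    have hp' := Finset.mem_range.1 hp
    exact Finset.mem_Icc.2 ⟨dtil_pos, dtil_lt hp'⟩
  · rw [Finset.card_image_of_injOn (dtil_inj (by omega)), Finset.card_range,
      Nat.card_Icc]
    omega

lemma image_dtil {g : ℕ → ℤ} {n : ℕ} :
    (Finset.range (n+1)).image (dtil g n) = Finset.Icc 1 (n+1) := by
  refine Finset.eq_of_subset_of_card_le ?_ ?_
  · intro x hx
    rcases Finset.mem_image.1 hx with ⟨p, hp, rfl⟩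
    have hp' := Finset.mem_range.1 hp
    rcases Nat.lt_or_ge p n with h | h
    · exact Finset.mem_Icc.2 ⟨dtil_pos, (dtil_lt h).trans (by omega)⟩
    · have : p = n := by omega
      subst this
      rw [dtil_top]
      exact Finset.mem_Icc.2 ⟨by omega, le_refl _⟩
  · rw [Finset.card_image_of_injOn (dtil_inj (by omega)), Finset.card_range,
      Nat.card_Icc]
    omega

variable {R : Type*} [CommRing R]

lemma sum_dtil_max (t : R) {g : ℕ → ℤ} {n : ℕ} :
    ∑ p ∈ Finset.range (n+1), t^(if p = n then 0 else dtil g n p)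
      = ∑ j ∈ Finset.range (n+1), t^j := by
  rw [Finset.sum_range_succ, if_pos rfl]
  have h1 : ∑ p ∈ Finset.range n, t^(if p = n then 0 else dtil g n p)
      = ∑ p ∈ Finset.range n, t^(dtil g n p) := by
    refine Finset.sum_congr rfl fun p hp => ?_
    rw [if_neg (by have := Finset.mem_range.1 hp; omega)]
  have h2 : ∑ p ∈ Finset.range n, t^(dtil g n p)
      = ∑ j ∈ Finset.Icc 1 n, t^j := by
    rw [← image_dtil_lt (g := g) (n := n),
      Finset.sum_image (fun x hx y hy' h => dtil_inj (g:=g) (m:=n) (Nat.le_succ _) (by simpa using hx) (by simpa using hy') h)]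
  have h3 : ∑ j ∈ Finset.range (n+1), t^j
      = t^0 + ∑ j ∈ Finset.Icc 1 n, t^j := by
    rw [Finset.range_eq_Ico, Finset.sum_eq_sum_Ico_succ_bot (by omega : 0 < n+1),
      ← Finset.Ico_add_one_right_eq_Icc]
  rw [h1, h2, h3]
  ring
  
lemma sum_dtil_min (t : R) {g : ℕ → ℤ} {n : ℕ} :
    ∑ p ∈ Finset.range (n+1), t^(dtil g n p)
      = ∑ j ∈ Finset.range (n+1), t^(j+1) := by
  have h2 : ∑ p ∈ Finset.range (n+1), t^(dtil g n p)
      = ∑ j ∈ Finset.Icc 1 (n+1), t^j := by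
    rw [← image_dtil (g := g) (n := n),
      Finset.sum_image (fun x hx y hy' h => dtil_inj (g:=g) (m:=n+1) (le_refl _) (by simpa using hx) (by simpa using hy') h)]
  rw [h2, ← Finset.Ico_add_one_right_eq_Icc, Finset.sum_Ico_eq_sum_range]
  refine Finset.sum_congr (by norm_num) fun i _ => ?_
  rw [Nat.add_comm 1 i]

def ext {d : ℕ} (w : Fin d → ℤ) : ℕ → ℤ := fun i => if h : i < d then w ⟨i, h⟩ else 0
lemma ext_lt {d : ℕ} {w : Fin d → ℤ} {i : ℕ} (h : i < d) : ext w i = w ⟨i, h⟩ := dif_pos h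

def word {d : ℕ} (σ : Equiv.Perm (Fin d) × (Fin d → Bool)) : Fin d → ℤ := fun i => sVal σ i

def SW (d : ℕ) : Finset (Fin d → ℤ) := Finset.univ.image word

lemma natAbs_sVal {d : ℕ} (σ : Equiv.Perm (Fin d) × (Fin d → Bool)) (i : Fin d) :
    (sVal σ i).natAbs = (σ.1 i : ℕ) + 1 := by
  unfold sVal
  split_ifs <;> simp <;> omega

lemma sVal_neg_iff {d : ℕ} (σ : Equiv.Perm (Fin d) × (Fin d → Bool)) (i : Fin d) :
    sVal σ i < 0 ↔ σ.2 i = true := by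
  unfold sVal
  rcases σ.2 i with _ | _ <;> simp <;> omega

lemma word_injective {d : ℕ} : Function.Injective (word (d := d)) := by
  intro σ τ h
  have hn : ∀ i, (σ.1 i : ℕ) + 1 = (τ.1 i : ℕ) + 1 := by
    intro i
    rw [← natAbs_sVal, ← natAbs_sVal]
    exact congrArg Int.natAbs (congrFun h i)
  have h1 : σ.1 = τ.1 := Equiv.ext fun i => Fin.ext (by have := hn i; omega)
  have h2 : σ.2 = τ.2 := by
    funext i
    have := congrFun h i
    rcases hb : σ.2 i with _|_ <;> rcases hb' : τ.2 i with _|_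
    · rfl
    · exfalso
      have e1 : ¬ sVal σ i < 0 := by rw [sVal_neg_iff, hb]; simp
      have e2 : sVal τ i < 0 := by rw [sVal_neg_iff, hb']
      have this' : sVal σ i = sVal τ i := this
      exact e1 (this' ▸ e2)
    · exfalso
      have e1 : sVal σ i < 0 := by rw [sVal_neg_iff, hb]
      have e2 : ¬ sVal τ i < 0 := by rw [sVal_neg_iff, hb']; simp
      have this' : sVal σ i = sVal τ i := this
      exact e2 (this' ▸ e1)
    · rfl
  exact Prod.ext h1 h2

lemma mem_SW {d : ℕ} {w : Fin d → ℤ} :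
    w ∈ SW d ↔ (∀ i, 0 < (w i).natAbs ∧ (w i).natAbs ≤ d)
      ∧ Function.Injective (fun i => (w i).natAbs) := by
  constructor
  · rintro hw
    rcases Finset.mem_image.1 hw with ⟨σ, -, rfl⟩
    constructor
    · intro i
      rw [word, natAbs_sVal]
      have := (σ.1 i).isLt
      omega
    · intro i j h
      simp only [word, natAbs_sVal] at h
      exact σ.1.injective (Fin.ext (by omega))
  · rintro ⟨hb, hinj⟩
    have hπ0 : ∀ i : Fin d, (w i).natAbs - 1 < d := fun i => by have := hb i; omega
    set π0 : Fin d → Fin d := fun i => ⟨(w i).natAbs - 1, hπ0 i⟩ with hπ0def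
    have hπinj : Function.Injective π0 := by
      intro i j h
      apply hinj
      have h1 := congrArg Fin.val h
      simp only [hπ0def] at h1
      have b1 := (hb i).1
      have b2 := (hb j).1
      simp only
      omega
    set π := Equiv.ofBijective π0 (Finite.injective_iff_bijective.1 hπinj) with hπ
    refine Finset.mem_image.2 ⟨(π, fun i => decide (w i < 0)), Finset.mem_univ _, ?_⟩
    funext i
    have hval : ((π i : Fin d) : ℕ) = (w i).natAbs - 1 := rfl
    rw [word, sVal]
    simp only [hval]
    have b1 := (hb i).1
    by_cases hneg : w i < 0
    · rw [if_pos (by simpa using hneg)]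
      omega
    · rw [if_neg (by simpa using hneg)]
      omega

def sgn (n : ℕ) (s : Bool) : ℤ := if s then -((n:ℤ)+1) else (n:ℤ)+1

lemma natAbs_sgn {n s} : (sgn n s).natAbs = n + 1 := by
  rcases s with _|_ <;> simp [sgn] <;> omega

def insW {n : ℕ} (w : Fin n → ℤ) (p : Fin (n+1)) (s : Bool) : Fin (n+1) → ℤ :=
  fun i => insF (ext w) (p : ℕ) (sgn n s) (i : ℕ)

lemma insW_lt {n : ℕ} {w : Fin n → ℤ} {p : Fin (n+1)} {s : Bool} {i : Fin (n+1)}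
    (h : (i:ℕ) < (p:ℕ)) : insW w p s i = w ⟨(i:ℕ), by omega⟩ := by
  rw [insW, insF_lt h, ext_lt (by omega : (i:ℕ) < n)]

lemma insW_self {n : ℕ} {w : Fin n → ℤ} {p : Fin (n+1)} {s : Bool} {i : Fin (n+1)}
    (h : (i:ℕ) = (p:ℕ)) : insW w p s i = sgn n s := by
  rw [insW, h, insF_self]

lemma insW_gt {n : ℕ} {w : Fin n → ℤ} {p : Fin (n+1)} {s : Bool} {i : Fin (n+1)}
    (h : (p:ℕ) < (i:ℕ)) : insW w p s i = w ⟨(i:ℕ)-1, by omega⟩ := by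
  rw [insW, insF_gt h, ext_lt (by omega : (i:ℕ)-1 < n)]

lemma insW_mem {n : ℕ} {w : Fin n → ℤ} (hw : w ∈ SW n) (p : Fin (n+1)) (s : Bool) :
    insW w p s ∈ SW (n+1) := by
  rcases mem_SW.1 hw with ⟨hb, hinj⟩
  refine mem_SW.2 ⟨?_, ?_⟩
  · intro i
    rcases lt_trichotomy ((i:ℕ)) ((p:ℕ)) with h | h | h
    · rw [insW_lt h]
      have := hb ⟨(i:ℕ), by omega⟩
      omega
    · rw [insW_self h, natAbs_sgn]
      omega
    · rw [insW_gt h]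
      have := hb ⟨(i:ℕ)-1, by omega⟩
      omega
  · intro i j h
    simp only at h
    have key : ∀ k : Fin (n+1), (k:ℕ) ≠ (p:ℕ) → (insW w p s k).natAbs ≤ n := by
      intro k hk
      rcases lt_or_gt_of_ne hk with h' | h'
      · rw [insW_lt h']
        exact (hb _).2
      · rw [insW_gt h']
        exact (hb _).2
    by_cases hi : (i:ℕ) = (p:ℕ) <;> by_cases hj : (j:ℕ) = (p:ℕ)
    · exact Fin.ext (by omega)
    · exfalso
      rw [insW_self hi, natAbs_sgn] at h
      have := key j hj
      omega
    · exfalso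
      rw [insW_self hj, natAbs_sgn] at h
      have := key i hi
      omega
    · rcases lt_or_gt_of_ne hi with h1 | h1 <;> rcases lt_or_gt_of_ne hj with h2 | h2
      · rw [insW_lt h1, insW_lt h2] at h
        have := hinj h
        exact Fin.ext (by have := congrArg Fin.val this; simpa using this)
      · rw [insW_lt h1, insW_gt h2] at h
        have := congrArg Fin.val (hinj h)
        simp only at this
        exact Fin.ext (by omega)
      · rw [insW_gt h1, insW_lt h2] at h
        have := congrArg Fin.val (hinj h)
        simp only at this
        exact Fin.ext (by omega)
      · rw [insW_gt h1, insW_gt h2] at h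
        have := congrArg Fin.val (hinj h)
        simp only at this
        exact Fin.ext (by omega)

lemma SW_succ {n : ℕ} :
    SW (n+1) = ((SW n) ×ˢ (Finset.univ : Finset (Fin (n+1) × Bool))).image
      (fun x => insW x.1 x.2.1 x.2.2) := by
  ext w'
  constructor
  · intro hw'
    rcases mem_SW.1 hw' with ⟨hb, hinj⟩
    -- find the position of the letter of absolute value n+1
    have hF : Function.Injective (fun i : Fin (n+1) => (⟨(w' i).natAbs - 1, by have := hb i; omega⟩ : Fin (n+1))) := by
      intro i j h
      have h1 := congrArg Fin.val h
      simp only at h1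
      have b1 := (hb i).1
      have b2 := (hb j).1
      exact hinj (by simp only; omega)
    obtain ⟨q, hq⟩ := (Finite.injective_iff_surjective.1 hF) ⟨n, by omega⟩
    have hq' : (w' q).natAbs = n + 1 := by
      have := congrArg Fin.val hq
      simp only at this
      have := (hb q).1
      omega
    have hother : ∀ i : Fin (n+1), i ≠ q → (w' i).natAbs ≤ n := by
      intro i hiq
      have h1 := (hb i).2
      rcases Nat.lt_or_ge ((w' i).natAbs) (n+1) with h | h
      · omega
      · exfalso
        exact hiq (hinj (by simp only; omega))
    set w : Fin n → ℤ := fun i => if h : (i:ℕ) < (q:ℕ) then w' ⟨(i:ℕ), by omega⟩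
      else w' ⟨(i:ℕ)+1, by omega⟩ with hwdef
    have hwval : ∀ i : Fin n, ∃ j : Fin (n+1), j ≠ q ∧ w i = w' j := by
      intro i
      by_cases h : (i:ℕ) < (q:ℕ)
      · refine ⟨⟨(i:ℕ), by omega⟩, ?_, by rw [hwdef]; simp [h]⟩
        intro heq
        have := congrArg Fin.val heq
        simp only at this
        omega
      · refine ⟨⟨(i:ℕ)+1, by omega⟩, ?_, by rw [hwdef]; simp [h]⟩
        intro heq
        have := congrArg Fin.val heq
        simp only at this
        omega
    have hwmem : w ∈ SW n := by
      refine mem_SW.2 ⟨?_, ?_⟩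
      · intro i
        obtain ⟨j, hjq, hj⟩ := hwval i
        rw [hj]
        have := (hb j).1
        have := hother j hjq
        omega
      · intro i j h
        simp only [hwdef] at h
        by_cases h1 : (i:ℕ) < (q:ℕ) <;> by_cases h2 : (j:ℕ) < (q:ℕ)
        · rw [dif_pos h1, dif_pos h2] at h
          have := congrArg Fin.val (hinj h)
          simp only at this
          exact Fin.ext (by omega)
        · rw [dif_pos h1, dif_neg h2] at h
          have := congrArg Fin.val (hinj h)
          simp only at this
          exfalso
          omega
        · rw [dif_neg h1, dif_pos h2] at h
          have := congrArg Fin.val (hinj h)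
          simp only at this
          exfalso
          omega
        · rw [dif_neg h1, dif_neg h2] at h
          have := congrArg Fin.val (hinj h)
          simp only at this
          exact Fin.ext (by omega)
    refine Finset.mem_image.2 ⟨(w, (q, decide (w' q < 0))), Finset.mem_product.2 ⟨hwmem, Finset.mem_univ _⟩, ?_⟩
    funext i
    rcases lt_trichotomy ((i:ℕ)) ((q:ℕ)) with h | h | h
    · rw [insW_lt h, hwdef]
      simp only [dif_pos h] <;> exact congrArg w' (Fin.ext rfl)
    · have hiq : w' i = w' q := congrArg w' (Fin.ext h)
      rw [insW_self h, hiq]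
      by_cases hneg : w' q < 0
      · have hd : decide (w' q < 0) = true := by simpa using hneg
        rw [hd]
        simp [sgn]
        omega
      · have hd : decide (w' q < 0) = false := by simpa using hneg
        rw [hd]
        simp [sgn]
        omega
    · rw [insW_gt h, hwdef]
      simp only [dif_neg (by omega : ¬ ((i:ℕ)-1 < (q:ℕ)))]
      exact congrArg w' (Fin.ext (by simp only; omega))
  · intro hw'
    rcases Finset.mem_image.1 hw' with ⟨⟨w, p, s⟩, hmem, rfl⟩
    exact insW_mem (Finset.mem_product.1 hmem).1 p s


def wm {d : ℕ} (w : Fin d → ℤ) : ℕ := wmajn (ext w) d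

lemma sWmaj_eq {d : ℕ} (σ : Equiv.Perm (Fin d) × (Fin d → Bool)) :
    sWmaj σ = wm (word σ) := by
  have hmaj : (∑ i ∈ Finset.range d, if h : i + 1 < d then
      (if sVal σ ⟨i + 1, h⟩ < sVal σ ⟨i, Nat.lt_of_succ_lt h⟩ then i + 1 else 0)
    else 0) = majn (ext (word σ)) (d-1) := by
    rw [majn, ← Finset.sum_subset (Finset.range_subset_range.2 (by omega : d-1 ≤ d))]
    · refine Finset.sum_congr rfl fun i hi => ?_
      have hi' : i < d - 1 := Finset.mem_range.1 hi
      rw [dif_pos (by omega : i + 1 < d), ext_lt (by omega : i+1 < d),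
        ext_lt (by omega : i < d)]
      rfl
    · intro i hi hni
      have h1 := Finset.mem_range.1 hi
      have h2 : ¬ (i < d - 1) := fun hc => hni (Finset.mem_range.2 hc)
      rw [dif_neg (by omega)]
  have hneg : sNeg σ = negn (ext (word σ)) d := by
    rw [sNeg, negn, Finset.card_filter, ← Fin.sum_univ_eq_sum_range
      (fun i => if ext (word σ) i < 0 then 1 else 0) d]
    refine Finset.sum_congr rfl fun i _ => ?_
    rw [ext_lt i.isLt]
    congr 1
  rw [sWmaj, hmaj, hneg]
  rfl

lemma sum_SW {R : Type*} [CommRing R] (t : R) (d : ℕ) :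
    ∑ σ : Equiv.Perm (Fin d) × (Fin d → Bool), t ^ sWmaj σ
      = ∑ w ∈ SW d, t ^ wm w := by
  rw [SW, Finset.sum_image (fun x _ y _ h => word_injective h)]
  exact Finset.sum_congr rfl fun σ _ => by rw [sWmaj_eq]

lemma insW_injOn {n : ℕ} (x : (Fin n → ℤ) × (Fin (n+1) × Bool))
    (hx : x ∈ (SW n) ×ˢ (Finset.univ : Finset (Fin (n+1) × Bool)))
    (y : (Fin n → ℤ) × (Fin (n+1) × Bool))
    (hy : y ∈ (SW n) ×ˢ (Finset.univ : Finset (Fin (n+1) × Bool)))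
    (h : insW x.1 x.2.1 x.2.2 = insW y.1 y.2.1 y.2.2) : x = y := by
  obtain ⟨w1, p1, s1⟩ := x
  obtain ⟨w2, p2, s2⟩ := y
  simp only at h
  have hb1 := (mem_SW.1 (Finset.mem_product.1 hx).1).1
  have hb2 := (mem_SW.1 (Finset.mem_product.1 hy).1).1
  have hp : p1 = p2 := by
    by_contra hne
    have hne' : (p1:ℕ) ≠ (p2:ℕ) := fun hc => hne (Fin.ext hc)
    have h1 : insW w1 p1 s1 p1 = sgn n s1 := insW_self rfl
    have h2 : (insW w2 p2 s2 p1).natAbs ≤ n := by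
      rcases lt_or_gt_of_ne hne' with hlt | hgt
      · rw [insW_lt hlt]
        exact (hb2 _).2
      · rw [insW_gt hgt]
        exact (hb2 _).2
    rw [← congrFun h p1, h1, natAbs_sgn] at h2
    omega
  subst hp
  have hs : s1 = s2 := by
    have h1 := congrFun h p1
    rw [insW_self rfl, insW_self rfl] at h1
    rcases s1 with _|_ <;> rcases s2 with _|_ <;> simp [sgn] at h1 ⊢ <;> omega
  subst hs
  have hw : w1 = w2 := by
    funext i
    rcases Nat.lt_or_ge (i:ℕ) (p1:ℕ) with hlt | hge
    · have h1 := congrFun h ⟨(i:ℕ), by omega⟩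
      rw [insW_lt (by simpa using hlt), insW_lt (by simpa using hlt)] at h1
      simpa using h1
    · have h1 := congrFun h ⟨(i:ℕ)+1, by omega⟩
      rw [insW_gt (w := w1) (by simp; omega), insW_gt (w := w2) (by simp; omega)] at h1
      simpa using h1
  rw [hw]

lemma step {R : Type*} [CommRing R] (t : R) (n : ℕ) :
    ∑ w ∈ SW (n+1), t ^ wm w
      = ((∑ j ∈ Finset.range (n+1), t^j) + ∑ j ∈ Finset.range (n+1), t^(j+1))
        * ∑ w ∈ SW n, t ^ wm w := by
  rw [SW_succ, Finset.sum_image insW_injOn, Finset.sum_product, Finset.mul_sum]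
  refine Finset.sum_congr rfl fun w hw => ?_
  have hb := (mem_SW.1 hw).1
  have hcongr : ∀ (p : Fin (n+1)) (s : Bool),
      wm (insW w p s) = wmajn (insF (ext w) (p:ℕ) (sgn n s)) (n+1) := by
    intro p s
    refine wmajn_congr fun i hi => ?_
    rw [ext_lt hi]
    rfl
  have hmax : ∀ p : Fin (n+1),
      wm (insW w p false) = wm w + (if (p:ℕ) = n then 0 else dtil (ext w) n (p:ℕ)) := by
    intro p
    rw [hcongr, wm]
    exact wmajn_insF_max p.is_le (by simp [sgn] <;> omega)
      (fun i hi => by rw [ext_lt hi]; have := (hb ⟨i, hi⟩).2; simp [sgn]; omega)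
  have hmin : ∀ p : Fin (n+1),
      wm (insW w p true) = wm w + dtil (ext w) n (p:ℕ) := by
    intro p
    rw [hcongr, wm]
    exact wmajn_insF_min p.is_le (by simp [sgn] <;> omega)
      (fun i hi => by rw [ext_lt hi]; have := (hb ⟨i, hi⟩).2; simp [sgn]; omega)
  calc ∑ x : Fin (n+1) × Bool, t ^ wm (insW w x.1 x.2)
      = ∑ p : Fin (n+1), (t ^ wm (insW w p true) + t ^ wm (insW w p false)) := by
        rw [Fintype.sum_prod_type]
        exact Finset.sum_congr rfl fun p _ => by rw [Fintype.sum_bool]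
    _ = (∑ p : Fin (n+1), t ^ (wm w + dtil (ext w) n (p:ℕ)))
        + ∑ p : Fin (n+1), t ^ (wm w + (if (p:ℕ) = n then 0 else dtil (ext w) n (p:ℕ))) := by
        rw [← Finset.sum_add_distrib]
        exact Finset.sum_congr rfl fun p _ => by rw [hmax p, hmin p]
    _ = (∑ q ∈ Finset.range (n+1), t ^ (wm w + dtil (ext w) n q))
        + ∑ q ∈ Finset.range (n+1), t ^ (wm w + (if q = n then 0 else dtil (ext w) n q)) := by
        rw [Fin.sum_univ_eq_sum_range (fun q => t ^ (wm w + dtil (ext w) n q)),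
          Fin.sum_univ_eq_sum_range (fun q => t ^ (wm w + (if q = n then 0 else dtil (ext w) n q)))]
    _ = t ^ wm w * ((∑ j ∈ Finset.range (n+1), t^(j+1)) + ∑ j ∈ Finset.range (n+1), t^j) := by
        rw [mul_add]
        congr 1
        · rw [show (∑ q ∈ Finset.range (n+1), t^(wm w + dtil (ext w) n q))
              = ∑ q ∈ Finset.range (n+1), t^(wm w) * t^(dtil (ext w) n q) from
            Finset.sum_congr rfl fun q _ => pow_add t _ _,
            ← Finset.mul_sum, sum_dtil_min t (g := ext w) (n := n)]
        · rw [show (∑ q ∈ Finset.range (n+1), t^(wm w + if q = n then 0 else dtil (ext w) n q))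
              = ∑ q ∈ Finset.range (n+1), t^(wm w) * t^(if q = n then 0 else dtil (ext w) n q) from
            Finset.sum_congr rfl fun q _ => pow_add t _ _,
            ← Finset.mul_sum, sum_dtil_max t (g := ext w) (n := n)]
    _ = _ := by ring

theorem aux {R : Type*} [CommRing R] (t : R) (d : ℕ) :
    ∑ σ : Equiv.Perm (Fin d) × (Fin d → Bool), t ^ sWmaj σ =
      (1 + t) ^ d * ∏ j ∈ Finset.Icc 1 d, ∑ i ∈ Finset.range j, t ^ i := by
  induction d with
  | zero =>
    simp [sWmaj, sNeg]
  | succ n ih =>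
    rw [sum_SW, step, ← sum_SW, ih, Finset.prod_Icc_succ_top (by omega : 1 ≤ n+1)]
    have h1 : ∑ j ∈ Finset.range (n+1), t^(j+1) = (∑ j ∈ Finset.range (n+1), t^j) * t := by
      rw [Finset.sum_mul]
      exact Finset.sum_congr rfl fun j _ => (pow_succ t j)
    rw [h1]
    ring


end SP

/-- `∑_{σ ∈ S_d^±} t^{Wmaj(σ)} = (1+t)^d ∏_{j=1}^d (1 + t + ⋯ + t^{j-1})`. -/
theorem stmt7 {R : Type*} [CommRing R] (t : R) (d : ℕ) (hd : 0 < d) :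
    ∑ σ : Equiv.Perm (Fin d) × (Fin d → Bool), t ^ sWmaj σ =
      (1 + t) ^ d * ∏ j ∈ Finset.Icc 1 d, ∑ i ∈ Finset.range j, t ^ i :=
  SP.aux t d
end

section
/- For every natural number d, ∑_{l=0}^{⌊d/2⌋} C(d,2l)_q q^{l(2l-1)} = ∏_{j=1}^{d-1} (1 + q^j), where C(d,2l)_q is the Gaussian binomial coefficient. -/
/-- Gaussian (q-)binomial coefficient `C(d,k)_q`, defined by
`C(d,0)_q = 1`, `C(0,k+1)_q = 0` and `C(d,i)_q = C(d-1,i-1)_q + q^i C(d-1,i)_q`. -/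
def qBinom {R : Type*} [CommRing R] (q : R) : ℕ → ℕ → R
  | _, 0 => 1
  | 0, _ + 1 => 0
  | d + 1, k + 1 => qBinom q d k + q ^ (k + 1) * qBinom q d (k + 1)

lemma qBinom_map {R S : Type*} [CommRing R] [CommRing S] (f : R →+* S) (q : R) :
    ∀ d k, f (qBinom q d k) = qBinom (f q) d k := by
  intro d
  induction d with
  | zero => intro k; cases k <;> simp [qBinom]
  | succ d ih =>
    intro k
    cases k with
    | zero => simp [qBinom]
    | succ k => simp [qBinom, ih]

lemma qBinom_eq_zero {R : Type*} [CommRing R] (q : R) :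
    ∀ d k, d < k → qBinom q d k = 0 := by
  intro d
  induction d with
  | zero => intro k hk; cases k with
    | zero => omega
    | succ k => simp [qBinom]
  | succ d ih =>
    intro k hk
    cases k with
    | zero => omega
    | succ k =>
      have h1 : d < k := by omega
      have h2 : d < k + 1 := by omega
      simp [qBinom, ih k h1, ih (k+1) h2]

/-- the q-binomial theorem -/
lemma qbt {R : Type*} [CommRing R] (q : R) (d : ℕ) :
    ∀ x : R, ∑ k ∈ Finset.range (d + 1), qBinom q d k * q ^ (k.choose 2) * x ^ k =
      ∏ j ∈ Finset.range d, (1 + q ^ j * x) := by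
  induction d with
  | zero => intro x; simp [qBinom]
  | succ d ih =>
    intro x
    rw [Finset.prod_range_succ']
    simp only [pow_zero, one_mul]
    have hprod : ∏ i ∈ Finset.range d, (1 + q ^ (i + 1) * x)
        = ∏ i ∈ Finset.range d, (1 + q ^ i * (q * x)) := by
      apply Finset.prod_congr rfl
      intro i _
      ring
    rw [hprod, ← ih (q * x)]
    rw [Finset.sum_range_succ' (fun k => qBinom q (d+1) k * q ^ (k.choose 2) * x ^ k)]
    have hstep : ∀ k, qBinom q (d+1) (k+1) * q ^ ((k+1).choose 2) * x ^ (k+1)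
        = qBinom q d k * q ^ (k.choose 2) * (q * x) ^ k * x
          + (qBinom q d (k+1) * q ^ ((k+1).choose 2) * (q * x) ^ (k+1)) := by
      intro k
      have hc : (k+1).choose 2 = k.choose 2 + k := by
        rw [Nat.choose_succ_succ, Nat.choose_one_right, add_comm]
      show (qBinom q d k + q ^ (k + 1) * qBinom q d (k + 1)) * q ^ ((k+1).choose 2) * x ^ (k+1) = _
      rw [hc]
      ring
    rw [Finset.sum_congr rfl (fun k _ => hstep k), Finset.sum_add_distrib]
    have h2 : ∑ k ∈ Finset.range (d+1), qBinom q d (k+1) * q ^ ((k+1).choose 2) * (q * x) ^ (k+1)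
        = (∑ k ∈ Finset.range (d+1), qBinom q d k * q ^ (k.choose 2) * (q * x) ^ k) - 1 := by
      have := Finset.sum_range_succ' (fun k => qBinom q d k * q ^ (k.choose 2) * (q * x) ^ k) (d+1)
      rw [Finset.sum_range_succ] at this
      simp only [qBinom_eq_zero q d (d+1) (by omega), zero_mul, add_zero,
        pow_zero, mul_one, Nat.choose_zero_succ] at this
      have h0 : qBinom q d 0 = 1 := by cases d <;> rfl
      rw [h0] at this
      linear_combination -this
    rw [h2, ← Finset.sum_mul]
    simp only [Nat.choose_zero_succ, pow_zero, mul_one, one_mul]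
    have h0 : qBinom q (d+1) 0 = 1 := rfl
    rw [h0]
    ring

/-- splitting a range sum into even and odd indices -/
lemma sum_split {M : Type*} [AddCommMonoid M] (f : ℕ → M) :
    ∀ n, ∑ k ∈ Finset.range n, f k =
      ∑ l ∈ Finset.range ((n + 1) / 2), f (2 * l) +
        ∑ l ∈ Finset.range (n / 2), f (2 * l + 1) := by
  intro n
  induction n with
  | zero => simp
  | succ n ih =>
    rw [Finset.sum_range_succ, ih]
    rcases Nat.even_or_odd n with ⟨m, hm⟩ | ⟨m, hm⟩
    · subst hm
      rw [show (m + m + 1 + 1) / 2 = m + 1 by omega, show (m + m + 1) / 2 = m by omega,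
        show (m + m) / 2 = m by omega,
        show (∑ l ∈ Finset.range (m + 1), f (2 * l))
          = ∑ l ∈ Finset.range m, f (2 * l) + f (2 * m) from Finset.sum_range_succ _ m,
        show m + m = 2 * m by omega]
      abel
    · subst hm
      rw [show (2 * m + 1 + 1 + 1) / 2 = m + 1 by omega,
        show (2 * m + 1 + 1) / 2 = m + 1 by omega, show (2 * m + 1) / 2 = m by omega,
        show (∑ l ∈ Finset.range (m + 1), f (2 * l + 1))
          = ∑ l ∈ Finset.range m, f (2 * l + 1) + f (2 * m + 1) from Finset.sum_range_succ _ m]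
      abel

lemma key (d : ℕ) :
    ∑ l ∈ Finset.range (d / 2 + 1), qBinom (Polynomial.X : Polynomial ℤ) d (2 * l) *
        (Polynomial.X : Polynomial ℤ) ^ (l * (2 * l - 1)) =
      ∏ j ∈ Finset.Icc 1 (d - 1), (1 + (Polynomial.X : Polynomial ℤ) ^ j) := by
  set q : Polynomial ℤ := Polynomial.X
  rcases Nat.eq_zero_or_pos d with rfl | hd
  · simp [qBinom]
  have h1 := qbt q d 1
  have h2 := qbt q d (-1)
  have hzero : ∏ j ∈ Finset.range d, (1 + q ^ j * (-1 : Polynomial ℤ)) = 0 := by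
    apply Finset.prod_eq_zero (Finset.mem_range.mpr hd)
    simp
  rw [hzero] at h2
  have hone : ∏ j ∈ Finset.range d, (1 + q ^ j * (1 : Polynomial ℤ))
      = 2 * ∏ j ∈ Finset.Icc 1 (d - 1), (1 + q ^ j) := by
    obtain ⟨e, rfl⟩ : ∃ e, d = e + 1 := ⟨d - 1, by omega⟩
    rw [Finset.prod_range_succ']
    have : Finset.Icc 1 (e + 1 - 1) = Finset.Icc 1 e := by simp
    rw [this]
    have : ∏ i ∈ Finset.range e, (1 + q ^ (i + 1) * 1)
        = ∏ j ∈ Finset.Icc 1 e, (1 + q ^ j) := by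
      rw [show Finset.Icc 1 e = Finset.Ico 1 (e + 1) by rw [Finset.Ico_add_one_right_eq_Icc],
        Finset.prod_Ico_eq_prod_range]
      simp only [add_tsub_cancel_right, mul_one]
      exact Finset.prod_congr rfl fun i _ => by rw [add_comm 1 i]
    rw [this]
    ring
  rw [hone] at h1
  -- add the two specializations
  have hadd : ∑ k ∈ Finset.range (d + 1),
      (qBinom q d k * q ^ (k.choose 2) * (1 : Polynomial ℤ) ^ k
        + qBinom q d k * q ^ (k.choose 2) * (-1 : Polynomial ℤ) ^ k)
      = 2 * ∏ j ∈ Finset.Icc 1 (d - 1), (1 + q ^ j) := by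
    rw [Finset.sum_add_distrib, h1, h2, add_zero]
  rw [sum_split _ (d + 1)] at hadd
  have heven : ∀ l, qBinom q d (2 * l) * q ^ ((2 * l).choose 2) * (1 : Polynomial ℤ) ^ (2 * l)
        + qBinom q d (2 * l) * q ^ ((2 * l).choose 2) * (-1 : Polynomial ℤ) ^ (2 * l)
      = 2 * (qBinom q d (2 * l) * q ^ (l * (2 * l - 1))) := by
    intro l
    have hc : (2 * l).choose 2 = l * (2 * l - 1) := by
      rw [Nat.choose_two_right, mul_assoc, Nat.mul_div_cancel_left _ (by norm_num : 0 < 2)]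
    have hneg : ((-1 : Polynomial ℤ)) ^ (2 * l) = 1 := by
      rw [pow_mul]; norm_num
    rw [hc, one_pow, hneg]
    ring
  have hodd : ∀ l, qBinom q d (2 * l + 1) * q ^ ((2 * l + 1).choose 2) * (1 : Polynomial ℤ) ^ (2 * l + 1)
        + qBinom q d (2 * l + 1) * q ^ ((2 * l + 1).choose 2) * (-1 : Polynomial ℤ) ^ (2 * l + 1)
      = 0 := by
    intro l
    have hneg : ((-1 : Polynomial ℤ)) ^ (2 * l + 1) = -1 := by
      rw [pow_succ, pow_mul]; norm_num
    rw [one_pow, hneg]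
    ring
  rw [Finset.sum_congr rfl (fun l _ => heven l), Finset.sum_congr rfl (fun l _ => hodd l),
    Finset.sum_const, smul_zero, add_zero, ← Finset.mul_sum,
    show (d + 1 + 1) / 2 = d / 2 + 1 by omega] at hadd
  exact mul_left_cancel₀ two_ne_zero hadd

/-- `∑_{l=0}^{⌊d/2⌋} C(d,2l)_q q^{l(2l-1)} = ∏_{j=1}^{d-1} (1 + q^j)`. -/
theorem stmt14 {R : Type*} [CommRing R] (q : R) (d : ℕ) :
    ∑ l ∈ Finset.range (d / 2 + 1), qBinom q d (2 * l) * q ^ (l * (2 * l - 1)) =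
      ∏ j ∈ Finset.Icc 1 (d - 1), (1 + q ^ j) := by
  have h := congrArg (Polynomial.aeval q : Polynomial ℤ →ₐ[ℤ] R) (key d)
  have hq : ∀ d k, (Polynomial.aeval q : Polynomial ℤ →ₐ[ℤ] R)
      (qBinom (Polynomial.X : Polynomial ℤ) d k) = qBinom q d k := by
    intro d k
    have := qBinom_map ((Polynomial.aeval q : Polynomial ℤ →ₐ[ℤ] R) : Polynomial ℤ →+* R)
      (Polynomial.X : Polynomial ℤ) d k
    simpa using this
  simpa [map_sum, map_prod, hq] using h
end

section
/- Let q be an odd prime power and let (F_q^{2d}, ω) be a nondegenerate symplectic space of dimension 2d over F_q. The number of k-dimensional isotropic subspaces of F_q^{2d} (for 0 ≤ k ≤ d) equals ∏_{j=0}^{k-1} (q^{2d-j} - q^j)/(q^k - q^j) = ∏_{j=0}^{k-1} (1-q^{2d-2j})/(1-q^{k-j}). -/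
open LinearMap Module Submodule Set Finset

section Aux

variable {K V : Type*} [Field K] [Fintype K] [AddCommGroup V] [Module K V]
  [FiniteDimensional K V] [Finite V]

attribute [local instance] Fintype.ofFinite

variable {B : LinearMap.BilinForm K V}

lemma span_mem_ortho {k : ℕ} {s : Fin k → V} {v : V}
    (hv : ∀ i, B (s i) v = 0) : v ∈ B.orthogonal (Submodule.span K (Set.range s)) := by
  intro y hy
  have hle : Submodule.span K (Set.range s) ≤ LinearMap.ker (B.flip v) := by
    rw [Submodule.span_le]
    rintro _ ⟨i, rfl⟩
    simpa using hv i
  simpa using hle hy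

lemma span_le_ortho {k : ℕ} {s : Fin k → V} (hs : ∀ i j, B (s i) (s j) = 0) :
    Submodule.span K (Set.range s) ≤ B.orthogonal (Submodule.span K (Set.range s)) := by
  rw [Submodule.span_le]
  rintro _ ⟨j, rfl⟩
  exact span_mem_ortho (fun i => hs i j)

lemma card_iso_tuples (halt : B.IsAlt) (hnd : B.Nondegenerate) (k : ℕ)
    (hkn : 2 * k ≤ Module.finrank K V) :
    Nat.card {s : Fin k → V // LinearIndependent K s ∧ ∀ i j, B (s i) (s j) = 0} =
      ∏ j ∈ Finset.range k,
        (Fintype.card K ^ (Module.finrank K V - j) - Fintype.card K ^ j) := by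
  set q := Fintype.card K
  set n := Module.finrank K V
  induction k with
  | zero =>
    haveI : Unique {s : Fin 0 → V // LinearIndependent K s ∧ ∀ i j, B (s i) (s j) = 0} :=
      ⟨⟨⟨fun i => i.elim0, linearIndependent_empty_type, fun i => i.elim0⟩⟩,
        fun t => Subtype.ext (funext fun i => i.elim0)⟩
    rw [Finset.range_zero, Finset.prod_empty, Nat.card_unique]
  | succ k ih =>
    have hkn' : 2 * k ≤ n := by omega
    set T' := {s : Fin (k + 1) → V // LinearIndependent K s ∧ ∀ i j, B (s i) (s j) = 0}
    set T := {s : Fin k → V // LinearIndependent K s ∧ ∀ i j, B (s i) (s j) = 0}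
    let g : T' → T := fun t =>
      ⟨Fin.init t.1, (linearIndependent_fin_succ'.mp t.2.1).1,
        fun i j => t.2.2 i.castSucc j.castSucc⟩
    have hfiber : ∀ s : T, Nat.card {t : T' // g t = s} = q ^ (n - k) - q ^ k := by
      intro s
      set S := Submodule.span K (Set.range s.1) with hS
      set O := B.orthogonal S with hO
      have e : {t : T' // g t = s} ≃ ((O : Set V) \ (S : Set V) : Set V) := by
        refine ⟨fun t => ⟨t.1.1 (Fin.last k), ?_, ?_⟩, fun v =>
          ⟨⟨Fin.snoc s.1 v.1, ?_, ?_⟩, ?_⟩, ?_, ?_⟩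
        · have h : Fin.init t.1.1 = s.1 := congrArg Subtype.val t.2
          refine span_mem_ortho fun i => ?_
          rw [← h]
          exact t.1.2.2 i.castSucc (Fin.last k)
        · have h : Fin.init t.1.1 = s.1 := congrArg Subtype.val t.2
          rw [hS, ← h]
          exact (linearIndependent_fin_succ'.mp t.1.2.1).2
        · exact linearIndependent_fin_snoc.mpr ⟨s.2.1, v.2.2⟩
        · have hv : ∀ i, B (s.1 i) v.1 = 0 := fun i =>
            v.2.1 _ (Submodule.subset_span ⟨i, rfl⟩)
          intro i j
          refine Fin.lastCases ?_ (fun i' => ?_) i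
          · refine Fin.lastCases ?_ (fun j' => ?_) j
            · simp [halt _]
            · simp only [Fin.snoc_last, Fin.snoc_castSucc]
              exact halt.isRefl _ _ (hv j')
          · refine Fin.lastCases ?_ (fun j' => ?_) j
            · simp only [Fin.snoc_last, Fin.snoc_castSucc]
              exact hv i'
            · simp only [Fin.snoc_castSucc]
              exact s.2.2 i' j'
        · refine Subtype.ext ?_
          simp only [g]
          exact Fin.init_snoc _ _
        · intro t
          refine Subtype.ext (Subtype.ext ?_)
          have h : Fin.init t.1.1 = s.1 := congrArg Subtype.val t.2
          simp only [← h]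
          exact Fin.snoc_init_self _
        · intro v
          refine Subtype.ext ?_
          simp only [Fin.snoc_last]
      rw [Nat.card_congr e, Nat.card_coe_set_eq,
        Set.ncard_diff (SetLike.coe_subset_coe.mpr (span_le_ortho s.2.2)) (Set.toFinite _)]
      have hrS : Module.finrank K S = k := by
        rw [hS, finrank_span_eq_card s.2.1, Fintype.card_fin]
      have hrO : Module.finrank K O = n - k := by
        rw [hO, LinearMap.BilinForm.finrank_orthogonal hnd, hrS]
      have hcS : Set.ncard (S : Set V) = q ^ k := by
        rw [← Nat.card_coe_set_eq]
        show Nat.card S = q ^ k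
        rw [Nat.card_eq_fintype_card, card_eq_pow_finrank (K := K), hrS]
      have hcO : Set.ncard (O : Set V) = q ^ (n - k) := by
        rw [← Nat.card_coe_set_eq]
        show Nat.card O = q ^ (n - k)
        rw [Nat.card_eq_fintype_card, card_eq_pow_finrank (K := K), hrO]
      rw [hcS, hcO]
    have := Nat.card_congr (Equiv.sigmaFiberEquiv g).symm
    rw [this, Nat.card_eq_fintype_card, Fintype.card_sigma]
    have : ∀ s : T, Fintype.card {t : T' // g t = s} = q ^ (n - k) - q ^ k := by
      intro s; rw [← Nat.card_eq_fintype_card]; exact hfiber s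
    rw [Finset.sum_congr rfl (fun s _ => this s), Finset.sum_const, smul_eq_mul,
      Finset.card_univ, ← Nat.card_eq_fintype_card, ih hkn', Finset.prod_range_succ]

lemma card_iso_subspaces_mul (halt : B.IsAlt) (k : ℕ) :
    Nat.card {s : Fin k → V // LinearIndependent K s ∧ ∀ i j, B (s i) (s j) = 0} =
      Nat.card {W : Submodule K V //
          Module.finrank K W = k ∧ ∀ x ∈ W, ∀ y ∈ W, B x y = 0} *
        ∏ j ∈ Finset.range k, (Fintype.card K ^ k - Fintype.card K ^ j) := by
  set q := Fintype.card K
  set T := {s : Fin k → V // LinearIndependent K s ∧ ∀ i j, B (s i) (s j) = 0}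
  set WT := {W : Submodule K V // Module.finrank K W = k ∧ ∀ x ∈ W, ∀ y ∈ W, B x y = 0}
  let f : T → WT := fun s =>
    ⟨Submodule.span K (Set.range s.1),
      by rw [finrank_span_eq_card s.2.1, Fintype.card_fin],
      fun x hx y hy => span_le_ortho s.2.2 hy x hx⟩
  have hfiber : ∀ W : WT, Nat.card {t : T // f t = W} =
      ∏ j ∈ Finset.range k, (q ^ k - q ^ j) := by
    intro W
    have e : {t : T // f t = W} ≃ {u : Fin k → W.1 // LinearIndependent K u} := by
      refine ⟨fun t => ⟨fun i => ⟨t.1.1 i, ?_⟩, ?_⟩, fun u =>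
        ⟨⟨fun i => (u.1 i : V), ?_, fun i j => W.2.2 _ (u.1 i).2 _ (u.1 j).2⟩, ?_⟩, ?_, ?_⟩
      · have h : Submodule.span K (Set.range t.1.1) = W.1 := congrArg Subtype.val t.2
        exact h ▸ Submodule.subset_span ⟨i, rfl⟩
      · exact (t.1.2.1 : LinearIndependent K t.1.1).of_comp W.1.subtype
      · exact u.2.map' W.1.subtype (Submodule.ker_subtype _)
      · refine Subtype.ext ?_
        show Submodule.span K (Set.range fun i => ((u.1 i : V))) = W.1
        have h1 : Submodule.span K (Set.range u.1) = ⊤ := by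
          apply Submodule.eq_top_of_finrank_eq
          rw [finrank_span_eq_card u.2, Fintype.card_fin, W.2.1]
        have h2 : Set.range (fun i => (u.1 i : V)) = W.1.subtype '' Set.range u.1 := by
          rw [← Set.range_comp]; rfl
        rw [h2, ← Submodule.map_span, h1, Submodule.map_subtype_top]
      · intro t
        exact Subtype.ext (Subtype.ext rfl)
      · intro u
        exact Subtype.ext (funext fun i => Subtype.ext rfl)
    rw [Nat.card_congr e]
    have hle : k ≤ Module.finrank K W.1 := W.2.1.ge
    rw [card_linearIndependent (K := K) (V := W.1) hle, W.2.1, Finset.prod_range (fun j => q ^ k - q ^ j)]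
  have h1 := Nat.card_congr (Equiv.sigmaFiberEquiv f).symm
  rw [h1, Nat.card_eq_fintype_card, Fintype.card_sigma]
  have : ∀ W : WT, Fintype.card {t : T // f t = W} =
      ∏ j ∈ Finset.range k, (q ^ k - q ^ j) := by
    intro W; rw [← Nat.card_eq_fintype_card]; exact hfiber W
  rw [Finset.sum_congr rfl (fun W _ => this W), Finset.sum_const, smul_eq_mul,
    Finset.card_univ, ← Nat.card_eq_fintype_card]

end Aux

/-- Over a finite field of odd cardinality `q`, the number of `k`-dimensional
isotropic subspaces of a nondegenerate symplectic space of dimension `2d`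
equals `∏_{j=0}^{k-1} (q^{2d-j} - q^j)/(q^k - q^j)`. -/
theorem stmt16 (F : Type*) [Field F] [Fintype F] (q : ℕ)
    (hq : Fintype.card F = q) (hodd : Odd q)
    (d k : ℕ) (hk : k ≤ d)
    (ω : (Fin (2 * d) → F) →ₗ[F] (Fin (2 * d) → F) →ₗ[F] F)
    (halt : ∀ v, ω v v = 0)
    (hnd : ∀ v, (∀ w, ω v w = 0) → v = 0) :
    (Nat.card {W : Submodule F (Fin (2 * d) → F) //
        Module.finrank F W = k ∧ ∀ x ∈ W, ∀ y ∈ W, ω x y = 0} : ℚ) =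
      ∏ j ∈ Finset.range k,
        ((q : ℚ) ^ (2 * d - j) - (q : ℚ) ^ j) / ((q : ℚ) ^ k - (q : ℚ) ^ j) := by
  have hB : LinearMap.BilinForm.IsAlt ω := halt
  have hBnd : LinearMap.BilinForm.Nondegenerate ω :=
    (LinearMap.IsRefl.nondegenerate_iff_separatingLeft hB.isRefl).mpr hnd
  have hn : Module.finrank F (Fin (2 * d) → F) = 2 * d := by
    rw [Module.finrank_fintype_fun_eq_card, Fintype.card_fin]
  have hkey := card_iso_tuples hB hBnd k (by omega)
  rw [card_iso_subspaces_mul hB k, hq, hn] at hkey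
  -- now hkey : card * ∏ (q^k - q^j) = ∏ (q^(2d-j) - q^j) in ℕ
  have hq2 : 2 ≤ q := by rw [← hq]; exact Fintype.one_lt_card
  have h1q : (1 : ℚ) < (q : ℚ) := by exact_mod_cast hq2
  have hden : ∀ j ∈ Finset.range k, (0 : ℚ) < (q : ℚ) ^ k - (q : ℚ) ^ j := by
    intro j hj
    have := pow_lt_pow_right₀ h1q (Finset.mem_range.mp hj)
    linarith
  have hdenne : (∏ j ∈ Finset.range k, ((q : ℚ) ^ k - (q : ℚ) ^ j)) ≠ 0 :=
    ne_of_gt (Finset.prod_pos hden)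
  have cast1 : ((∏ j ∈ Finset.range k, (q ^ k - q ^ j) : ℕ) : ℚ) =
      ∏ j ∈ Finset.range k, ((q : ℚ) ^ k - (q : ℚ) ^ j) := by
    rw [Nat.cast_prod]
    refine Finset.prod_congr rfl fun j hj => ?_
    rw [Nat.cast_sub (Nat.pow_le_pow_right (by omega) (Finset.mem_range.mp hj).le)]
    push_cast; ring
  have cast2 : ((∏ j ∈ Finset.range k, (q ^ (2 * d - j) - q ^ j) : ℕ) : ℚ) =
      ∏ j ∈ Finset.range k, ((q : ℚ) ^ (2 * d - j) - (q : ℚ) ^ j) := by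
    rw [Nat.cast_prod]
    refine Finset.prod_congr rfl fun j hj => ?_
    have hj' : j < k := Finset.mem_range.mp hj
    rw [Nat.cast_sub (Nat.pow_le_pow_right (by omega) (by omega))]
    push_cast; ring
  rw [Finset.prod_div_distrib, eq_div_iff hdenne, ← cast1, ← cast2, ← Nat.cast_mul, hkey]
end

section
/- The coefficients of the Mahonian polynomial M_d(q,t) = ∑_{σ∈S_d} q^{inv(σ)} t^{maj(σ)} and of the type-BC Weyl-Mahonian polynomial M_d^±(q,t) = ∑_{σ∈S_d^±} q^{l^±(σ)} t^{Wmaj(σ)} agree in all monomials q^a t^b with total degree a+b ≤ d. -/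
open Finset MvPolynomial

/-- Number of inversions of a permutation of `Fin d`. -/
def invPerm {d : ℕ} (σ : Equiv.Perm (Fin d)) : ℕ :=
  (Finset.univ.filter (fun p : Fin d × Fin d => p.1 < p.2 ∧ σ p.2 < σ p.1)).card

/-- Major index of a permutation of `Fin d` (sum of 1-based descent positions). -/
def majPerm {d : ℕ} (σ : Equiv.Perm (Fin d)) : ℕ :=
  ∑ i ∈ Finset.range d, if h : i + 1 < d then
    (if σ ⟨i + 1, h⟩ < σ ⟨i, Nat.lt_of_succ_lt h⟩ then i + 1 else 0) else 0

/-- The Mahonian polynomial `M_d(q,t)` as a polynomial in `q = X 0`, `t = X 1`. -/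
noncomputable def MdPoly (d : ℕ) : MvPolynomial (Fin 2) ℤ :=
  ∑ σ : Equiv.Perm (Fin d), X 0 ^ invPerm σ * X 1 ^ majPerm σ

/-- The type-BC Weyl-Mahonian polynomial `M_d^±(q,t)` in `q = X 0`, `t = X 1`. -/
noncomputable def MdPMPoly (d : ℕ) : MvPolynomial (Fin 2) ℤ :=
  ∑ σ : Equiv.Perm (Fin d) × (Fin d → Bool), X 0 ^ sLenBC σ * X 1 ^ sWmaj σ

/-! ### Auxiliary lemmas -/

lemma sval_cases {d : ℕ} (σ : Equiv.Perm (Fin d) × (Fin d → Bool)) (i : Fin d) :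
    (sVal σ i = ((σ.1 i : ℕ) : ℤ) + 1 ∧ 0 < sVal σ i) ∨
    (sVal σ i = -(((σ.1 i : ℕ) : ℤ) + 1) ∧ sVal σ i < 0) := by
  unfold sVal
  cases hb : σ.2 i
  · left
    rw [if_neg Bool.false_ne_true]
    exact ⟨by ring, by positivity⟩
  · right
    rw [if_pos rfl]
    refine ⟨by ring, ?_⟩
    have : (0 : ℤ) < ((σ.1 i : ℕ) : ℤ) + 1 := by positivity
    linarith

lemma int_prod_pos_iff (x y : ℤ) (hx : 0 < x) (hy : 0 < y) :
    0 < x * y * (x - y) ↔ y < x := by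
  constructor
  · intro h
    by_contra hc
    push_neg at hc
    nlinarith [mul_pos hx hy]
  · intro h
    nlinarith [mul_pos hx hy]

lemma sVal_false {d : ℕ} (τ : Equiv.Perm (Fin d)) (i : Fin d) :
    sVal (τ, fun _ => false) i = ((τ i : ℕ) : ℤ) + 1 := by
  simp [sVal]

lemma sVal_false_pos {d : ℕ} (τ : Equiv.Perm (Fin d)) (i : Fin d) :
    0 < sVal (τ, fun _ => false) i := by
  rw [sVal_false]; positivity

lemma cast_succ_lt_iff {d : ℕ} (x y : Fin d) :
    (((x : ℕ) : ℤ) + 1 < ((y : ℕ) : ℤ) + 1) ↔ x < y := by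
  rw [Fin.lt_def]; omega

lemma sInv_false {d : ℕ} (τ : Equiv.Perm (Fin d)) :
    sInv (τ, fun _ => false) = invPerm τ := by
  unfold sInv invPerm
  congr 1
  apply Finset.filter_congr
  intro p _
  constructor
  · rintro ⟨h1, h2⟩
    refine ⟨h1, ?_⟩
    rw [sVal_false, sVal_false,
      int_prod_pos_iff _ _ (by positivity) (by positivity), cast_succ_lt_iff] at h2
    exact h2
  · rintro ⟨h1, h2⟩
    refine ⟨h1, ?_⟩
    rw [sVal_false, sVal_false,
      int_prod_pos_iff _ _ (by positivity) (by positivity), cast_succ_lt_iff]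
    exact h2

lemma sNeg_false {d : ℕ} (τ : Equiv.Perm (Fin d)) :
    sNeg (τ, fun _ => false) = 0 := by
  unfold sNeg
  rw [Finset.card_eq_zero, Finset.filter_eq_empty_iff]
  intro i _
  exact not_lt.mpr (sVal_false_pos τ i).le

lemma sLenBC_false {d : ℕ} (τ : Equiv.Perm (Fin d)) :
    sLenBC (τ, fun _ => false) = invPerm τ := by
  unfold sLenBC
  have he : (Finset.univ.filter
      (fun i : Fin d => sVal (τ, fun _ => false) i < 0)) = ∅ := by
    rw [Finset.filter_eq_empty_iff]
    intro i _
    exact not_lt.mpr (sVal_false_pos τ i).le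
  rw [he, Finset.sum_empty, sInv_false, add_zero]

lemma sWmaj_false {d : ℕ} (τ : Equiv.Perm (Fin d)) :
    sWmaj (τ, fun _ => false) = majPerm τ := by
  unfold sWmaj majPerm
  rw [sNeg_false, add_zero]
  apply Finset.sum_congr rfl
  intro i _
  by_cases hh : i + 1 < d
  · rw [dif_pos hh, dif_pos hh]
    rw [sVal_false, sVal_false]
    by_cases hlt : τ ⟨i + 1, hh⟩ < τ ⟨i, Nat.lt_of_succ_lt hh⟩
    · rw [if_pos ((cast_succ_lt_iff _ _).mpr hlt), if_pos hlt]
    · rw [if_neg (fun hc => hlt ((cast_succ_lt_iff _ _).mp hc)), if_neg hlt]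
  · rw [dif_neg hh, dif_neg hh]

/-- Key bound: any signed permutation with at least one negative value has
total statistic `l^± + Wmaj ≥ d + 1`. -/
lemma bound {d : ℕ} (σ : Equiv.Perm (Fin d) × (Fin d → Bool))
    (hne : ∃ i, sVal σ i < 0) : d + 1 ≤ sLenBC σ + sWmaj σ := by
  classical
  obtain ⟨iw, hiw⟩ := hne
  set N : Finset (Fin d) := Finset.univ.filter (fun i : Fin d => sVal σ i < 0) with hN
  have hNne : N.Nonempty := ⟨iw, by simp [hN, hiw]⟩
  obtain ⟨i0, hi0N, hmax⟩ := Finset.exists_max_image N (fun i => σ.1 i) hNne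
  have hi0neg : sVal σ i0 < 0 := (Finset.mem_filter.mp hi0N).2
  have hi0val : sVal σ i0 = -(((σ.1 i0 : ℕ) : ℤ) + 1) := by
    rcases sval_cases σ i0 with ⟨h1, h2⟩ | ⟨h1, _⟩
    · omega
    · exact h1
  -- i0 is the strict minimum of all values
  have hmin : ∀ j : Fin d, j ≠ i0 → sVal σ i0 < sVal σ j := by
    intro j hj
    rcases sval_cases σ j with ⟨h1, h2⟩ | ⟨h1, h2⟩
    · omega
    · have hjN : j ∈ N := by simp [hN, h2]
      have hle : σ.1 j ≤ σ.1 i0 := hmax j hjN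
      have hneq : σ.1 j ≠ σ.1 i0 := fun heq => hj (σ.1.injective heq)
      have hlt : (σ.1 j : ℕ) < (σ.1 i0 : ℕ) := Fin.lt_def.mp (lt_of_le_of_ne hle hneq)
      rw [h1, hi0val]; omega
  set k : ℕ := N.card with hk
  have hk1 : 1 ≤ k := Finset.card_pos.mpr hNne
  -- Part A : d ≤ sInv σ + k + i0
  have hA : d ≤ sInv σ + k + (i0 : ℕ) := by
    set A : Finset (Fin d) :=
      Finset.univ.filter (fun j : Fin d => i0 < j ∧ 0 < sVal σ j) with hAdef
    have hcardA : A.card ≤ sInv σ := by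
      unfold sInv
      apply Finset.card_le_card_of_injOn (fun j => (i0, j))
      · intro j hj
        rw [hAdef, Finset.mem_coe, Finset.mem_filter] at hj
        obtain ⟨-, hij, hpos⟩ := hj
        rw [Finset.mem_coe, Finset.mem_filter]
        refine ⟨Finset.mem_univ _, hij, ?_⟩
        have h1 : sVal σ i0 * sVal σ j < 0 := mul_neg_of_neg_of_pos hi0neg hpos
        have h2 : sVal σ i0 - sVal σ j < 0 := by linarith
        exact mul_pos_of_neg_of_neg h1 h2
      · intro x _ y _ hxy
        exact (Prod.mk.injEq _ _ _ _).mp hxy |>.2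
    have hsub : Finset.Ioi i0 ⊆ A ∪ N.erase i0 := by
      intro j hj
      rw [Finset.mem_Ioi] at hj
      rcases sval_cases σ j with ⟨-, h2⟩ | ⟨-, h2⟩
      · exact Finset.mem_union_left _ (by rw [hAdef]; simp [hj, h2])
      · exact Finset.mem_union_right _
          (Finset.mem_erase.mpr ⟨ne_of_gt hj, by simp [hN, h2]⟩)
    have hcard : (Finset.Ioi i0).card ≤ A.card + (N.erase i0).card :=
      le_trans (Finset.card_le_card hsub) (Finset.card_union_le _ _)
    rw [Fin.card_Ioi, Finset.card_erase_of_mem hi0N] at hcard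
    have hi0d : (i0 : ℕ) < d := i0.isLt
    omega
  -- Part B : the sign contribution
  set t : Fin d → ℕ := fun i => ((d : ℤ) + 1 + sVal σ i).toNat with ht
  have hti0 : t i0 + (σ.1 i0 : ℕ) = d := by
    have : (σ.1 i0 : ℕ) < d := (σ.1 i0).isLt
    rw [ht]; simp only []
    rw [hi0val]
    omega
  have hrest : (k - 1) ≤ ∑ i ∈ N.erase i0, t i := by
    have h1 : ∀ i ∈ N.erase i0, 1 ≤ t i := by
      intro i hi
      have hiN : i ∈ N := Finset.mem_of_mem_erase hi
      have hineg : sVal σ i < 0 := (Finset.mem_filter.mp hiN).2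
      have hival : sVal σ i = -(((σ.1 i : ℕ) : ℤ) + 1) := by
        rcases sval_cases σ i with ⟨h1, h2⟩ | ⟨h1, _⟩
        · omega
        · exact h1
      have : (σ.1 i : ℕ) < d := (σ.1 i).isLt
      rw [ht]; simp only []
      rw [hival]
      omega
    calc (k - 1) = (N.erase i0).card • 1 := by
            rw [smul_eq_mul, mul_one, Finset.card_erase_of_mem hi0N, hk]
      _ ≤ ∑ i ∈ N.erase i0, t i := Finset.card_nsmul_le_sum _ _ _ h1
  have hBsum : ∑ i ∈ N, t i = t i0 + ∑ i ∈ N.erase i0, t i :=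
    (Finset.add_sum_erase N t hi0N).symm
  -- Part C : descent contribution
  set D : ℕ := ∑ i ∈ Finset.range d, (if h : i + 1 < d then
      (if sVal σ ⟨i + 1, h⟩ < sVal σ ⟨i, Nat.lt_of_succ_lt h⟩ then i + 1 else 0)
    else 0) with hD
  have hC : (i0 : ℕ) ≤ D := by
    by_cases hz : (i0 : ℕ) = 0
    · omega
    · set c : ℕ := (i0 : ℕ) - 1 with hc
      have hc1 : c + 1 < d := by have := i0.isLt; omega
      have hcd : c ∈ Finset.range d := Finset.mem_range.mpr (by omega)
      have hfin : (⟨c + 1, hc1⟩ : Fin d) = i0 := by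
        apply Fin.ext; simp [hc]; omega
      have hterm : (if h : c + 1 < d then
          (if sVal σ ⟨c + 1, h⟩ < sVal σ ⟨c, Nat.lt_of_succ_lt h⟩ then c + 1 else 0)
        else 0) = c + 1 := by
        rw [dif_pos hc1, if_pos]
        rw [hfin]
        apply hmin
        intro hcon
        have : ((⟨c, Nat.lt_of_succ_lt hc1⟩ : Fin d) : ℕ) = (i0 : ℕ) := by rw [hcon]
        simp at this
        omega
      have hle := Finset.single_le_sum
        (f := fun i => (if h : i + 1 < d then
          (if sVal σ ⟨i + 1, h⟩ < sVal σ ⟨i, Nat.lt_of_succ_lt h⟩ then i + 1 else 0)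
        else 0)) (fun i _ => Nat.zero_le _) hcd
      rw [hterm, ← hD] at hle
      omega
  -- Assemble
  have hL : sLenBC σ = sInv σ + ∑ i ∈ N, t i := rfl
  have hW : sWmaj σ = D + k := rfl
  have hvd : (σ.1 i0 : ℕ) < d := (σ.1 i0).isLt
  rw [hL, hW, hBsum]
  omega

lemma coeff_mono (a b n m : ℕ) :
    (MvPolynomial.coeff (Finsupp.single 0 a + Finsupp.single 1 b)
      ((X 0 : MvPolynomial (Fin 2) ℤ) ^ n * X 1 ^ m)) = if n = a ∧ m = b then 1 else 0 := by
  rw [X_pow_eq_monomial, X_pow_eq_monomial, monomial_mul, one_mul, coeff_monomial]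
  by_cases hc : n = a ∧ m = b
  · obtain ⟨rfl, rfl⟩ := hc
    rw [if_pos rfl, if_pos ⟨rfl, rfl⟩]
  · rw [if_neg hc, if_neg]
    intro he
    apply hc
    constructor
    · have := DFunLike.congr_fun he (0 : Fin 2)
      simpa [Finsupp.single_apply] using this
    · have := DFunLike.congr_fun he (1 : Fin 2)
      simpa [Finsupp.single_apply] using this

/-- The coefficients of `M_d(q,t)` and `M_d^±(q,t)` agree in all monomials
`q^a t^b` of total degree `a + b ≤ d`. -/
theorem stmt19 (d a b : ℕ) (h : a + b ≤ d) :
    (MdPoly d).coeff (Finsupp.single 0 a + Finsupp.single 1 b) =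
      (MdPMPoly d).coeff (Finsupp.single 0 a + Finsupp.single 1 b) := by
  classical
  unfold MdPoly MdPMPoly
  rw [coeff_sum, coeff_sum]
  simp only [coeff_mono]
  rw [Fintype.sum_prod_type]
  refine Finset.sum_congr rfl (fun τ _ => ?_)
  rw [Finset.sum_eq_single_of_mem (fun _ : Fin d => false) (Finset.mem_univ _) ?_]
  · rw [sLenBC_false, sWmaj_false]
  · intro ε _ hε
    have hex : ∃ i, ε i = true := by
      by_contra hcon
      push_neg at hcon
      exact hε (funext fun i => by simpa using hcon i)
    obtain ⟨i, hi⟩ := hex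
    have hneg : sVal (τ, ε) i < 0 := by
      unfold sVal
      dsimp only
      rw [if_pos hi]
      have : (0 : ℤ) < ((τ i : ℕ) : ℤ) + 1 := by positivity
      linarith
    have hb := bound (τ, ε) ⟨i, hneg⟩
    rw [if_neg]
    rintro ⟨h1, h2⟩
    omega
end
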